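/- Let α ∈ (0,1]^k with α_1 ≥ ... ≥ α_k, Σ_i α_i > k−1, let t be the largest index i with α_i = 1 (t = 0 if none), and let v = ⌈1/α_k⌉. Then a nonnegative integer vector x ∈ ℤ_{≥0}^k satisfies α·x ≥ 1 if and only if it satisfies Σ_{i=1}^t x_i + Σ_{i=t+1}^{k−1} ((v−1)/v) x_i + (1/v) x_k ≥ 1. -/
import Mathlib


set_option maxHeartbeats 1000000 in
theorem stmt_4 (k : ℕ) (hk : 2 ≤ k) (α : Fin k → ℝ)
    (h0 : ∀ i, 0 < α i) (h1 : ∀ i, α i ≤ 1)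
    (hmono : ∀ i j : Fin k, i ≤ j → α j ≤ α i)
    (hsuml : (k : ℝ) - 1 < ∑ i, α i) (hsumu : ∑ i, α i ≤ (k : ℝ))
    (t : ℕ) (ht : ∀ i : Fin k, α i = 1 ↔ (i : ℕ) < t)
    (v : ℕ) (hv : (v : ℤ) = ⌈1 / α ⟨k - 1, by omega⟩⌉) :
    ∀ x : Fin k → ℕ, (1 ≤ ∑ i, α i * (x i : ℝ)) ↔
      (1 ≤ ∑ i : Fin k, (if i.val < t then (1 : ℝ)
                 else if i.val < k - 1 then ((v : ℝ) - 1) / (v : ℝ)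
                 else 1 / (v : ℝ)) * (x i : ℝ)) := by
  intro x
  by_cases htk : k ≤ t
  · -- all coefficients are 1 on both sides
    have hall : ∀ i : Fin k, α i = 1 := fun i => (ht i).mpr (lt_of_lt_of_le i.isLt htk)
    have hcoef : ∀ i : Fin k,
        (if (i : ℕ) < t then (1 : ℝ)
         else if (i : ℕ) < k - 1 then ((v : ℝ) - 1) / (v : ℝ)
         else 1 / (v : ℝ)) = 1 := fun i => if_pos (lt_of_lt_of_le i.isLt htk)
    simp only [hall, hcoef]
  · push_neg at htk
    set last : Fin k := ⟨k - 1, by omega⟩ with hlast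
    have hlastv : (last : ℕ) = k - 1 := rfl
    have ha0 : 0 < α last := h0 last
    have ha1 : α last < 1 := by
      refine lt_of_le_of_ne (h1 last) fun h => ?_
      have := (ht last).mp h
      rw [hlastv] at this
      omega
    -- facts about v
    have hle : (1 : ℝ) / α last ≤ (v : ℝ) := by
      have h := Int.le_ceil ((1 : ℝ) / α last)
      rw [← hv] at h
      exact_mod_cast h
    have hv2 : 2 ≤ v := by
      have h1a : (1 : ℝ) < 1 / α last := by
        rw [lt_div_iff₀ ha0]; linarith
      have : (1 : ℤ) < ⌈(1 : ℝ) / α last⌉ := by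
        rw [Int.lt_ceil]; exact_mod_cast h1a
      rw [← hv] at this
      exact_mod_cast this
    have hva : 1 ≤ α last * (v : ℝ) := by
      rw [div_le_iff₀ ha0] at hle
      linarith [hle]
    have hva' : α last * ((v : ℝ) - 1) < 1 := by
      have h := Int.ceil_lt_add_one ((1 : ℝ) / α last)
      rw [← hv] at h
      have h' : (v : ℝ) < 1 / α last + 1 := by exact_mod_cast h
      have h'' : (v : ℝ) - 1 < 1 / α last := by linarith
      rw [lt_div_iff₀ ha0] at h''
      linarith [h'']
    have hvR : (0 : ℝ) < (v : ℝ) := by positivity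
    -- pairwise bound
    have hpair : ∀ i j : Fin k, i ≠ j → 1 < α i + α j := by
      intro i j hij
      have hcard : (Finset.univ \ ({i, j} : Finset (Fin k))).card = k - 2 := by
        rw [Finset.card_sdiff_of_subset (Finset.subset_univ _), Finset.card_univ, Fintype.card_fin,
          Finset.card_insert_of_notMem (by simp [hij]), Finset.card_singleton]
      have hsub : ∑ l ∈ Finset.univ \ ({i, j} : Finset (Fin k)), α l ≤ (k : ℝ) - 2 := by
        calc ∑ l ∈ Finset.univ \ ({i, j} : Finset (Fin k)), α l
            ≤ ∑ _l ∈ Finset.univ \ ({i, j} : Finset (Fin k)), (1 : ℝ) :=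
              Finset.sum_le_sum fun l _ => h1 l
          _ = ((k - 2 : ℕ) : ℝ) := by rw [Finset.sum_const, hcard]; simp
          _ ≤ (k : ℝ) - 2 := by
              rw [Nat.cast_sub (by omega : 2 ≤ k)]; norm_num
      have hsplit2 : ∑ l, α l
          = ∑ l ∈ Finset.univ \ ({i, j} : Finset (Fin k)), α l + (α i + α j) := by
        rw [← Finset.sum_sdiff (Finset.subset_univ ({i, j} : Finset (Fin k))),
          Finset.sum_pair hij]
      linarith
    -- splitting lemma
    have hsing : (Finset.univ.filter
        fun i : Fin k => ¬ (i : ℕ) < t ∧ ¬ (i : ℕ) < k - 1) = {last} := by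
      ext i
      simp only [Finset.mem_filter, Finset.mem_univ, true_and, Finset.mem_singleton]
      constructor
      · rintro ⟨hi1, hi2⟩
        have := i.isLt
        exact Fin.ext (by omega)
      · rintro rfl
        rw [hlastv]
        omega
    have hsplit : ∀ f : Fin k → ℝ, ∑ i, f i =
        (∑ i ∈ Finset.univ.filter (fun i : Fin k => (i : ℕ) < t), f i)
        + (∑ i ∈ Finset.univ.filter
            (fun i : Fin k => ¬ (i : ℕ) < t ∧ (i : ℕ) < k - 1), f i)
        + f last := by
      intro f
      rw [← Finset.sum_filter_add_sum_filter_not Finset.univ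
        (fun i : Fin k => (i : ℕ) < t) f, add_assoc]
      congr 1
      rw [← Finset.sum_filter_add_sum_filter_not
        (Finset.univ.filter fun i : Fin k => ¬ (i : ℕ) < t)
        (fun i : Fin k => (i : ℕ) < k - 1) f, Finset.filter_filter, Finset.filter_filter,
        hsing, Finset.sum_singleton]
    set T := Finset.univ.filter (fun i : Fin k => (i : ℕ) < t) with hTdef
    set M := Finset.univ.filter
      (fun i : Fin k => ¬ (i : ℕ) < t ∧ (i : ℕ) < k - 1) with hMdef
    set A := ∑ i ∈ T, x i with hAdef
    set m := ∑ i ∈ M, x i with hmdef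
    set n := x last with hndef
    -- middle bounds
    set i2 : Fin k := ⟨k - 2, by omega⟩ with hi2
    set c := α i2 with hcdef
    have hca : α last ≤ c := hmono i2 last (by simp [hi2, hlast, Fin.le_def]; omega)
    have hc1 : 1 < c + α last := by
      refine hpair i2 last ?_
      simp only [hi2, hlast, Ne, Fin.ext_iff]
      omega
    have hc2 : 1 < 2 * c := by linarith
    set u := α ⟨t, by omega⟩ with hudef
    have hu1 : u < 1 := by
      refine lt_of_le_of_ne (h1 _) fun h => ?_
      have := (ht _).mp h
      simp at this
    have hu0 : 0 < u := h0 _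
    have hMlow : c * (m : ℝ) ≤ ∑ i ∈ M, α i * (x i : ℝ) := by
      have : ∀ i ∈ M, c * (x i : ℝ) ≤ α i * (x i : ℝ) := by
        intro i hi
        simp only [hMdef, Finset.mem_filter] at hi
        have hci : c ≤ α i := hmono i i2 (by simp [hi2, Fin.le_def]; omega)
        exact mul_le_mul_of_nonneg_right hci (by positivity)
      calc c * (m : ℝ) = ∑ i ∈ M, c * (x i : ℝ) := by
            rw [← Finset.mul_sum, hmdef]; push_cast; ring
        _ ≤ _ := Finset.sum_le_sum this
    have hMhigh : ∑ i ∈ M, α i * (x i : ℝ) ≤ u * (m : ℝ) := by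
      have : ∀ i ∈ M, α i * (x i : ℝ) ≤ u * (x i : ℝ) := by
        intro i hi
        simp only [hMdef, Finset.mem_filter] at hi
        have hci : α i ≤ u := hmono ⟨t, by omega⟩ i (by simp [Fin.le_def]; omega)
        exact mul_le_mul_of_nonneg_right hci (by positivity)
      calc ∑ i ∈ M, α i * (x i : ℝ) ≤ ∑ i ∈ M, u * (x i : ℝ) := Finset.sum_le_sum this
        _ = u * (m : ℝ) := by rw [← Finset.mul_sum, hmdef]; push_cast; ring
    -- LHS decomposition
    have hTsum : ∑ i ∈ T, α i * (x i : ℝ) = (A : ℝ) := by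
      rw [hAdef]
      push_cast
      refine Finset.sum_congr rfl fun i hi => ?_
      simp only [hTdef, Finset.mem_filter] at hi
      rw [(ht i).mpr hi.2, one_mul]
    have hLHS : ∑ i, α i * (x i : ℝ)
        = (A : ℝ) + (∑ i ∈ M, α i * (x i : ℝ)) + α last * (n : ℝ) := by
      rw [hsplit (fun i => α i * (x i : ℝ)), hTsum]
    -- RHS decomposition
    have hRHS : (∑ i : Fin k, (if (i : ℕ) < t then (1 : ℝ)
          else if (i : ℕ) < k - 1 then ((v : ℝ) - 1) / (v : ℝ)
          else 1 / (v : ℝ)) * (x i : ℝ))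
        = (A : ℝ) + ((v : ℝ) - 1) / (v : ℝ) * (m : ℝ) + 1 / (v : ℝ) * (n : ℝ) := by
      rw [hsplit]
      congr 1
      congr 1
      · rw [hAdef]; push_cast
        refine Finset.sum_congr rfl fun i hi => ?_
        simp only [hTdef, Finset.mem_filter] at hi
        rw [if_pos hi.2, one_mul]
      · rw [hmdef]
        push_cast
        rw [Finset.mul_sum]
        refine Finset.sum_congr rfl fun i hi => ?_
        simp only [hMdef, Finset.mem_filter] at hi
        rw [if_neg hi.2.1, if_pos hi.2.2]
      · rw [hlastv, if_neg (by omega), if_neg (by omega)]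
    -- RHS condition as a natural-number inequality
    have hRHSiff : (1 ≤ (A : ℝ) + ((v : ℝ) - 1) / (v : ℝ) * (m : ℝ)
          + 1 / (v : ℝ) * (n : ℝ))
        ↔ v ≤ v * A + (v - 1) * m + n := by
      rw [← Nat.cast_le (α := ℝ)]
      push_cast [Nat.cast_sub (by omega : 1 ≤ v)]
      have e1 : ((v : ℝ) - 1) / (v : ℝ) * (m : ℝ) * (v : ℝ) = ((v : ℝ) - 1) * (m : ℝ) := by
        field_simp
      have e2 : 1 / (v : ℝ) * (n : ℝ) * (v : ℝ) = (n : ℝ) := by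
        field_simp
      constructor <;> intro h
      · nlinarith [mul_le_mul_of_nonneg_right h (le_of_lt hvR), e1, e2]
      · nlinarith [h, e1, e2, hvR]
    rw [hLHS, hRHS, hRHSiff]
    constructor
    · -- forward: contrapositive
      intro hA
      by_contra hB
      push_neg at hB
      have hA0 : A = 0 := by
        by_contra h
        have : v ≤ v * A := Nat.le_mul_of_pos_right v (Nat.pos_of_ne_zero h)
        omega
      have hm1 : m ≤ 1 := by
        by_contra h
        push_neg at h
        have : 2 * (v - 1) ≤ m * (v - 1) := Nat.mul_le_mul_right _ h
        have : v ≤ (v - 1) * m := by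
          rw [mul_comm]; omega
        omega
      rw [hA0] at hB
      have hAr : (A : ℝ) = 0 := by rw [hA0]; simp
      interval_cases m
      · -- m = 0 : n ≤ v - 1
        have hn : n + 1 ≤ v := by omega
        have hnr : (n : ℝ) ≤ (v : ℝ) - 1 := by
          have : ((n + 1 : ℕ) : ℝ) ≤ (v : ℝ) := by exact_mod_cast Nat.cast_le.mpr hn
          push_cast at this
          linarith
        have h2 : α last * (n : ℝ) ≤ α last * ((v : ℝ) - 1) :=
          mul_le_mul_of_nonneg_left hnr (le_of_lt ha0)
        have h3 : ∑ i ∈ M, α i * (x i : ℝ) ≤ 0 := by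
          have := hMhigh
          simp only [Nat.cast_zero, mul_zero] at this
          linarith [this]
        linarith
      · -- m = 1 : n = 0
        have hn0 : n = 0 := by omega
        have h3 : ∑ i ∈ M, α i * (x i : ℝ) ≤ u := by
          have := hMhigh
          simp only [Nat.cast_one, mul_one] at this
          linarith [this]
        rw [hn0] at hA
        simp only [Nat.cast_zero, mul_zero] at hA
        linarith
    · -- backward
      intro hB
      have hM0 : (0 : ℝ) ≤ ∑ i ∈ M, α i * (x i : ℝ) :=
        Finset.sum_nonneg fun i _ => mul_nonneg (h0 i).le (Nat.cast_nonneg _)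
      rcases Nat.eq_zero_or_pos A with hA0 | hA1
      · rw [hA0] at hB ⊢
        simp only [Nat.cast_zero, zero_add, mul_zero, zero_add] at hB ⊢
        rcases Nat.lt_or_ge m 2 with hm | hm
        · interval_cases m
          · -- m = 0, n ≥ v
            have hn : v ≤ n := by omega
            have hnr : (v : ℝ) ≤ (n : ℝ) := by exact_mod_cast hn
            have : α last * (v : ℝ) ≤ α last * (n : ℝ) :=
              mul_le_mul_of_nonneg_left hnr (le_of_lt ha0)
            linarith
          · -- m = 1, n ≥ 1
            have hn : 1 ≤ n := by omega
            have hnr : (1 : ℝ) ≤ (n : ℝ) := by exact_mod_cast hn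
            have h2 : α last * 1 ≤ α last * (n : ℝ) :=
              mul_le_mul_of_nonneg_left hnr (le_of_lt ha0)
            have h3 : c * (1 : ℝ) ≤ ∑ i ∈ M, α i * (x i : ℝ) := by
              have := hMlow
              simp only [Nat.cast_one, mul_one] at this
              linarith [this]
            linarith
        · -- m ≥ 2
          have hmr : (2 : ℝ) ≤ (m : ℝ) := by exact_mod_cast hm
          have h3 : c * 2 ≤ c * (m : ℝ) :=
            mul_le_mul_of_nonneg_left hmr (by linarith)
          have h4 : (0 : ℝ) ≤ α last * (n : ℝ) := by positivity
          linarith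
      · have hAr : (1 : ℝ) ≤ (A : ℝ) := by exact_mod_cast hA1
        have h4 : (0 : ℝ) ≤ α last * (n : ℝ) := by positivity
        linarith
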